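/- Let K = PSL₂(ℤ_p) and K_∞ ≤ K the subgroup of lower triangular matrices (images of matrices of the form [[a,0],[c,d]]). Fix s = [[x,y],[z,t]] in SL₂(ℤ_p) with (y,t) not representing the class of (0,1) in P¹(ℤ_p²). Then K_∞ ∩ sK_∞s⁻¹ consists exactly of the classes of matrices [[a,0],[c,d]] ∈ SL₂(ℤ_p) satisfying y·t·(a − d) = y²·c. -/

import Mathlib

variable (p : ℕ) [Fact p.Prime]

/-- The subgroup of SL₂(ℤ_p) of lower triangular matrices [[a,0],[c,d]]. -/
def lowerTriangularSL : Subgroup (Matrix.SpecialLinearGroup (Fin 2) (PadicInt p)) where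
  carrier := {A | (A : Matrix (Fin 2) (Fin 2) (PadicInt p)) 0 1 = 0}
  one_mem' := by simp
  mul_mem' := by
    intro A B hA hB
    simp only [Set.mem_setOf_eq] at *
    rw [Matrix.SpecialLinearGroup.coe_mul, Matrix.mul_apply, Fin.sum_univ_two, hA, hB]
    ring
  inv_mem' := by
    intro A hA
    simp only [Set.mem_setOf_eq] at *
    rw [Matrix.SpecialLinearGroup.coe_inv, Matrix.adjugate_fin_two]
    simpa using hA

/-- PSL₂(ℤ_p), the quotient of SL₂(ℤ_p) by its center {±1}. -/
abbrev PSL2Zp := Matrix.SpecialLinearGroup (Fin 2) (PadicInt p) ⧸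
  Subgroup.center (Matrix.SpecialLinearGroup (Fin 2) (PadicInt p))

/-- K_∞ ≤ PSL₂(ℤ_p): the image of the lower triangular subgroup. -/
noncomputable def Kinf : Subgroup (PSL2Zp p) :=
  (lowerTriangularSL p).map
    (QuotientGroup.mk' (Subgroup.center (Matrix.SpecialLinearGroup (Fin 2) (PadicInt p))))

/-- Stmt 9: for s = [[x,y],[z,t]] ∈ SL₂(ℤ_p) whose second column class (y,t) is not the
class of (0,1) in P¹(ℤ_p²) (equivalently, since (y,t) is primitive, y ≠ 0), the
intersection K_∞ ∩ sK_∞s⁻¹ consists exactly of the classes of matrices [[a,0],[c,d]]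
in SL₂(ℤ_p) with y·t·(a − d) = y²·c. -/
theorem Kinf_inter_conj (s : Matrix.SpecialLinearGroup (Fin 2) (PadicInt p))
    (hy : (s : Matrix (Fin 2) (Fin 2) (PadicInt p)) 0 1 ≠ 0) (k : PSL2Zp p) :
    (k ∈ Kinf p ⊓ (Kinf p).map (MulAut.conj
        (QuotientGroup.mk' (Subgroup.center _) s)).toMonoidHom) ↔
      ∃ A : Matrix.SpecialLinearGroup (Fin 2) (PadicInt p),
        QuotientGroup.mk' (Subgroup.center _) A = k ∧
        (A : Matrix (Fin 2) (Fin 2) (PadicInt p)) 0 1 = 0 ∧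
        (s : Matrix (Fin 2) (Fin 2) (PadicInt p)) 0 1 *
            (s : Matrix (Fin 2) (Fin 2) (PadicInt p)) 1 1 *
            ((A : Matrix (Fin 2) (Fin 2) (PadicInt p)) 0 0 -
              (A : Matrix (Fin 2) (Fin 2) (PadicInt p)) 1 1) =
          (s : Matrix (Fin 2) (Fin 2) (PadicInt p)) 0 1 ^ 2 *
            (A : Matrix (Fin 2) (Fin 2) (PadicInt p)) 1 0 := by
  constructor
  · rintro ⟨hk1, hk2⟩
    obtain ⟨A, hA, hAk⟩ := hk1
    obtain ⟨b, hb, hbk⟩ := hk2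
    obtain ⟨B, hB, hBb⟩ := hb
    have hA01 : (A : Matrix (Fin 2) (Fin 2) (PadicInt p)) 0 1 = 0 := hA
    have hB01 : (B : Matrix (Fin 2) (Fin 2) (PadicInt p)) 0 1 = 0 := hB
    have hmk : QuotientGroup.mk' (Subgroup.center _) A =
        QuotientGroup.mk' (Subgroup.center _) (s * B * s⁻¹) := by
      rw [hAk, ← hbk, ← hBb]
      simp [MulAut.conj_apply, map_mul, mul_assoc]
    obtain ⟨z, hz, hAz⟩ := (QuotientGroup.mk'_eq_mk' _).mp hmk
    obtain ⟨r, hr, hrz⟩ := Matrix.SpecialLinearGroup.mem_center_iff.mp hz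
    rw [Fintype.card_fin] at hr
    have h2 : A * z * s = s * B := by rw [hAz]; group
    have h3 : ((A * z * s : Matrix.SpecialLinearGroup (Fin 2) (PadicInt p)) :
        Matrix (Fin 2) (Fin 2) (PadicInt p)) = ((s * B :
        Matrix.SpecialLinearGroup (Fin 2) (PadicInt p)) :
        Matrix (Fin 2) (Fin 2) (PadicInt p)) := by rw [h2]
    rw [Matrix.SpecialLinearGroup.coe_mul, Matrix.SpecialLinearGroup.coe_mul,
      Matrix.SpecialLinearGroup.coe_mul, ← hrz] at h3
    have e1 := congrFun (congrFun h3 0) 1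
    have e2 := congrFun (congrFun h3 1) 1
    simp only [Matrix.mul_apply, Fin.sum_univ_two, Matrix.scalar_apply,
      Matrix.diagonal_apply, hA01, hB01] at e1 e2
    norm_num at e1 e2
    refine ⟨A, hAk, hA01, ?_⟩
    linear_combination ((s : Matrix (Fin 2) (Fin 2) (PadicInt p)) 1 1) * r * e1 -
      ((s : Matrix (Fin 2) (Fin 2) (PadicInt p)) 0 1) * r * e2 -
      ((A : Matrix (Fin 2) (Fin 2) (PadicInt p)) 0 0 *
        (s : Matrix (Fin 2) (Fin 2) (PadicInt p)) 0 1 *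
        (s : Matrix (Fin 2) (Fin 2) (PadicInt p)) 1 1 -
       (A : Matrix (Fin 2) (Fin 2) (PadicInt p)) 1 0 *
        (s : Matrix (Fin 2) (Fin 2) (PadicInt p)) 0 1 ^ 2 -
       (A : Matrix (Fin 2) (Fin 2) (PadicInt p)) 1 1 *
        (s : Matrix (Fin 2) (Fin 2) (PadicInt p)) 0 1 *
        (s : Matrix (Fin 2) (Fin 2) (PadicInt p)) 1 1) * hr
  · rintro ⟨A, hAk, hA01, hcond⟩
    have hB01 : ((s⁻¹ * A * s : Matrix.SpecialLinearGroup (Fin 2) (PadicInt p)) :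
        Matrix (Fin 2) (Fin 2) (PadicInt p)) 0 1 = 0 := by
      rw [Matrix.SpecialLinearGroup.coe_mul, Matrix.SpecialLinearGroup.coe_mul,
        Matrix.SpecialLinearGroup.coe_inv, Matrix.adjugate_fin_two]
      simp only [Matrix.mul_apply, Fin.sum_univ_two, Matrix.of_apply, Matrix.cons_val',
        Matrix.cons_val_zero, Matrix.cons_val_one, Matrix.head_cons, Matrix.empty_val',
        Matrix.cons_val_fin_one, Matrix.head_fin_const, hA01]
      linear_combination hcond
    refine ⟨⟨A, hA01, hAk⟩, Subgroup.mem_map.mpr ⟨QuotientGroup.mk' _ (s⁻¹ * A * s),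
      ⟨s⁻¹ * A * s, hB01, rfl⟩, ?_⟩⟩
    rw [← hAk]
    simp only [MulEquiv.coe_toMonoidHom, MulAut.conj_apply, ← map_inv, ← map_mul]
    congr 1
    group
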